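/- Let N ≥ 1 and let w₁,…,w_N be positive integers; set r = 1 + w₁ + ⋯ + w_N, W = (∏_{j=1}^N w_j^{w_j})^{1/r} (the positive real r-th root), c = r/W, and ξ = e^{2πi/r}. Define f on (ℂ∖{0})^N by f(x₁,…,x_N) = x₁ + ⋯ + x_N + x₁^{−w₁}⋯x_N^{−w_N}, and let p_k = (w₁ξ^k/W, …, w_Nξ^k/W) for 0 ≤ k ≤ r−1. Then f(p_k) = c·ξ^k for every k; in particular every critical value u of f satisfies |u| ≤ c, and p₀ is the unique critical point of f contained in f^{−1}(c). -/

import Mathlib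

/-- Critical values of the Landau–Ginzburg potential
`f(x₁,…,x_N) = x₁ + ⋯ + x_N + x₁^{−w₁} ⋯ x_N^{−w_N}` mirror to `ℙ(1, w₁, …, w_N)`:
with `r = 1 + w₁ + ⋯ + w_N`, `W = (∏ wⱼ^{wⱼ})^{1/r}`, `c = r / W`, `ξ = e^{2πi/r}` and
`p_k = (w₁ ξ^k / W, …, w_N ξ^k / W)`, one has `f(p_k) = c ξ^k` for every `k`; in
particular every critical value `u` of `f` satisfies `|u| ≤ c`, and `p₀` is the unique
critical point of `f` contained in `f⁻¹(c)`. -/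
theorem critical_values_of_LG_potential_of_weighted_projective_space
    (N : ℕ) (hN : 1 ≤ N) (w : Fin N → ℕ) (hw : ∀ i, 0 < w i)
    (r : ℕ) (hr : r = 1 + ∑ i, w i)
    (W : ℝ) (hW : W = Real.rpow (∏ j, (w j : ℝ) ^ (w j)) ((r : ℝ)⁻¹))
    (c : ℝ) (hc : c = r / W)
    (ξ : ℂ) (hξ : ξ = Complex.exp (2 * (Real.pi : ℂ) * Complex.I / (r : ℂ)))
    (f : (Fin N → ℂ) → ℂ)
    (hf : f = fun x => (∑ i, x i) + ∏ j, (x j) ^ (-(w j : ℤ)))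
    (p : ℕ → Fin N → ℂ)
    (hp : p = fun k i => (w i : ℂ) * ξ ^ k / (W : ℂ)) :
    (∀ k, k < r → f (p k) = (c : ℂ) * ξ ^ k) ∧
    (∀ x : Fin N → ℂ, (∀ i, x i ≠ 0) →
      (∀ i, HasDerivAt (fun t => f (Function.update x i t)) 0 (x i)) →
      ‖f x‖ ≤ c) ∧
    (∀ x : Fin N → ℂ, (∀ i, x i ≠ 0) →
      (∀ i, HasDerivAt (fun t => f (Function.update x i t)) 0 (x i)) →
      f x = (c : ℂ) → x = p 0) := by
  have hrpos : 0 < r := by omega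
  have hr0R : (r : ℝ) ≠ 0 := Nat.cast_ne_zero.mpr hrpos.ne'
  have hr0C : (r : ℂ) ≠ 0 := Nat.cast_ne_zero.mpr hrpos.ne'
  have hX : 0 < ∏ j, (w j : ℝ) ^ (w j) :=
    Finset.prod_pos fun j _ => pow_pos (by exact_mod_cast hw j) _
  have hWpos : 0 < W := by rw [hW]; exact Real.rpow_pos_of_pos hX _
  have hW0C : (W : ℂ) ≠ 0 := by exact_mod_cast hWpos.ne'
  have hWr : W ^ r = ∏ j, (w j : ℝ) ^ (w j) := by
    rw [hW,
      show Real.rpow (∏ j, (w j : ℝ) ^ (w j)) ((r : ℝ)⁻¹)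
        = (∏ j, (w j : ℝ) ^ (w j)) ^ ((r : ℝ)⁻¹) from rfl,
      ← Real.rpow_natCast (_ ^ ((r : ℝ)⁻¹)) r, ← Real.rpow_mul hX.le,
      inv_mul_cancel₀ hr0R, Real.rpow_one]
  have hWrC : (W : ℂ) ^ r = ∏ j, (w j : ℂ) ^ (w j) := by
    have := congrArg (Complex.ofReal) hWr
    push_cast at this
    exact_mod_cast this
  have hwC : ∀ j, (w j : ℂ) ≠ 0 := fun j => Nat.cast_ne_zero.mpr (hw j).ne'
  -- product computation
  have prodcalc : ∀ Q : ℂ, Q ≠ 0 →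
      (∏ j, ((w j : ℂ) * Q) ^ (-(w j : ℤ)))
        = (∏ j, (w j : ℂ) ^ (w j))⁻¹ * (Q ^ (∑ j, w j))⁻¹ := by
    intro Q hQ
    simp only [mul_zpow]
    rw [Finset.prod_mul_distrib]
    congr 1
    · rw [← Finset.prod_inv_distrib]
      exact Finset.prod_congr rfl fun j _ => by
        rw [zpow_neg, zpow_natCast]
    · have : ∀ j : Fin N, Q ^ (-(w j : ℤ)) = (Q⁻¹) ^ (w j) := fun j => by
        rw [zpow_neg, zpow_natCast, inv_pow]
      rw [Finset.prod_congr rfl fun j _ => this j, Finset.prod_pow_eq_pow_sum, inv_pow]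
  -- key computation
  have key : ∀ Q : ℂ, Q ≠ 0 → Q ^ r = (∏ j, (w j : ℂ) ^ (w j))⁻¹ →
      f (fun i => (w i : ℂ) * Q) = r * Q := by
    intro Q hQ hQr
    rw [hf]
    simp only
    rw [prodcalc Q hQ, ← hQr, hr, pow_add, pow_one]
    rw [← Finset.sum_mul]
    have hQs : Q ^ (∑ j, w j) ≠ 0 := pow_ne_zero _ hQ
    field_simp
    push_cast
    ring
  -- derivative of the partial function
  have deriv_eq : ∀ (x : Fin N → ℂ), (∀ i, x i ≠ 0) → ∀ i : Fin N,
      HasDerivAt (fun t => f (Function.update x i t))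
        (1 + (∏ j ∈ Finset.univ.erase i, (x j) ^ (-(w j : ℤ)))
          * ((Int.cast (-(w i : ℤ)) : ℂ) * (x i) ^ (-(w i : ℤ) - 1))) (x i) := by
    intro x hx i
    have hfun : (fun t => f (Function.update x i t)) =
        fun t => (t + ∑ j ∈ Finset.univ.erase i, x j) +
          (∏ j ∈ Finset.univ.erase i, (x j) ^ (-(w j : ℤ))) * t ^ (-(w i : ℤ)) := by
      funext t
      rw [hf]
      simp only
      congr 1
      · rw [Finset.sum_update_of_mem (Finset.mem_univ i)]
        congr 1
        · rw [Finset.sdiff_singleton_eq_erase]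
      · have hcongr : ∀ j ∈ Finset.univ, (Function.update x i t j) ^ (-(w j : ℤ))
            = Function.update (fun j => (x j) ^ (-(w j : ℤ))) i (t ^ (-(w i : ℤ))) j := by
          intro j _
          rcases eq_or_ne j i with rfl | h
          · simp
          · simp [Function.update_of_ne h]
        rw [Finset.prod_congr rfl hcongr, Finset.prod_update_of_mem (Finset.mem_univ i),
          Finset.sdiff_singleton_eq_erase, mul_comm]
    rw [hfun]
    exact ((hasDerivAt_id (x i)).add_const _).add
      ((hasDerivAt_zpow (-(w i : ℤ)) (x i) (Or.inl (hx i))).const_mul _)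
  -- critical point characterization
  have crit : ∀ x : Fin N → ℂ, (∀ i, x i ≠ 0) →
      (∀ i, HasDerivAt (fun t => f (Function.update x i t)) 0 (x i)) →
      ∀ i, x i = (w i : ℂ) * ∏ j, (x j) ^ (-(w j : ℤ)) := by
    intro x hx hcrit i
    have h0 := (hcrit i).unique (deriv_eq x hx i)
    have hP : (∏ j, (x j) ^ (-(w j : ℤ)))
        = (x i) ^ (-(w i : ℤ)) * ∏ j ∈ Finset.univ.erase i, (x j) ^ (-(w j : ℤ)) :=
      (Finset.mul_prod_erase _ _ (Finset.mem_univ i)).symm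
    rw [zpow_sub_one₀ (hx i)] at h0
    rw [hP]
    have hxi := hx i
    push_cast at h0
    linear_combination (-(x i)) * h0 +
      ((w i : ℂ) * ((x i) ^ (-(w i : ℤ))) * ∏ j ∈ Finset.univ.erase i, (x j) ^ (-(w j : ℤ)))
        * (mul_inv_cancel₀ hxi)
  -- from criticality, the value of P
  have critP : ∀ x : Fin N → ℂ, (∀ i, x i ≠ 0) →
      (∀ i, HasDerivAt (fun t => f (Function.update x i t)) 0 (x i)) →
      (∏ j, (x j) ^ (-(w j : ℤ))) ≠ 0 ∧
      (∏ j, (x j) ^ (-(w j : ℤ))) ^ r = (∏ j, (w j : ℂ) ^ (w j))⁻¹ ∧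
      f x = r * (∏ j, (x j) ^ (-(w j : ℤ))) := by
    intro x hx hcrit
    set P := ∏ j, (x j) ^ (-(w j : ℤ)) with hPdef
    have hxi := crit x hx hcrit
    have hP0 : P ≠ 0 := Finset.prod_ne_zero_iff.mpr fun j _ => zpow_ne_zero _ (hx j)
    have hself : P = (∏ j, (w j : ℂ) ^ (w j))⁻¹ * (P ^ (∑ j, w j))⁻¹ := by
      calc P = ∏ j, ((w j : ℂ) * P) ^ (-(w j : ℤ)) := by
              rw [hPdef]
              exact Finset.prod_congr rfl fun j _ => by rw [← hxi j]
        _ = _ := prodcalc P hP0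
      
    have hPr : P ^ r = (∏ j, (w j : ℂ) ^ (w j))⁻¹ := by
      rw [hr, pow_add, pow_one]
      have hA : (∏ j, (w j : ℂ) ^ (w j)) ≠ 0 :=
        Finset.prod_ne_zero_iff.mpr fun j _ => pow_ne_zero _ (hwC j)
      have hPs : P ^ (∑ j, w j) ≠ 0 := pow_ne_zero _ hP0
      field_simp at hself ⊢
      linear_combination hself
    refine ⟨hP0, hPr, ?_⟩
    have hxfun : x = fun i => (w i : ℂ) * P := funext hxi
    calc f x = f (fun i => (w i : ℂ) * P) := by rw [← hxfun]
      _ = r * P := key P hP0 hPr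
  refine ⟨?_, ?_, ?_⟩
  · -- part 1
    intro k hk
    have hξ0 : ξ ≠ 0 := by rw [hξ]; exact Complex.exp_ne_zero _
    have hξr : ξ ^ r = 1 := by
      rw [hξ, ← Complex.exp_nat_mul,
        show (r : ℂ) * (2 * (Real.pi : ℂ) * Complex.I / (r : ℂ))
          = 2 * (Real.pi : ℂ) * Complex.I from by
            rw [mul_comm, div_mul_cancel₀ _ hr0C]]
      exact Complex.exp_two_pi_mul_I
    have hQ0 : ξ ^ k / (W : ℂ) ≠ 0 := div_ne_zero (pow_ne_zero _ hξ0) hW0C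
    have hQr : (ξ ^ k / (W : ℂ)) ^ r = (∏ j, (w j : ℂ) ^ (w j))⁻¹ := by
      rw [div_pow, ← pow_mul, mul_comm k r, pow_mul, hξr, one_pow, hWrC, one_div]
    have hpk : p k = fun i => (w i : ℂ) * (ξ ^ k / (W : ℂ)) := by
      rw [hp]; funext i; ring
    rw [hpk, key _ hQ0 hQr, hc]
    push_cast
    ring
  · -- part 2
    intro x hx hcrit
    obtain ⟨hP0, hPr, hfx⟩ := critP x hx hcrit
    set P := ∏ j, (x j) ^ (-(w j : ℤ)) with hPdef
    have habsP : ‖P‖ = 1 / W := by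
      have h1 : ‖P‖ ^ r = (1 / W) ^ r := by
        rw [← norm_pow, hPr, ← hWrC, norm_inv, norm_pow, Complex.norm_real, Real.norm_eq_abs,
          abs_of_pos hWpos, div_pow, one_pow, one_div]
      exact (pow_left_inj₀ (norm_nonneg _) (by positivity) hrpos.ne' ).mp h1
    rw [hfx, norm_mul, Complex.norm_natCast, habsP, hc]
    rw [mul_one_div]
  · -- part 3
    intro x hx hcrit hfc
    obtain ⟨hP0, hPr, hfx⟩ := critP x hx hcrit
    set P := ∏ j, (x j) ^ (-(w j : ℤ)) with hPdef
    rw [hfx] at hfc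
    have hPval : P = 1 / (W : ℂ) := by
      rw [hc] at hfc
      push_cast at hfc
      have h2 : (r : ℂ) * P = (r : ℂ) * (1 / (W : ℂ)) := by rw [hfc, mul_one_div]
      exact mul_left_cancel₀ hr0C h2
    have hxi := crit x hx hcrit
    funext i
    have hgoal : p 0 i = (w i : ℂ) / (W : ℂ) := by rw [hp]; simp
    rw [hgoal, hxi i, ← hPdef, hPval]
    ring
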